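/- Let a₁, a₂, a₅ > 0 and a₃, a₄ ∈ ℝ with a₃ < a₄·a₅. Define 𝒻(λ) = (a₁λ³ + a₂λ² + a₃λ + a₄)/(a₅λ + 1) and 𝒢(λ) = 2a₁a₅λ³ + (3a₁ + a₂a₅)λ² + 2a₂λ + (a₃ − a₄a₅). Then there exists λ* > 0 with 𝒢(λ*) = 0 such that for all λ ≥ 0, 𝒻(λ*) ≤ 𝒻(λ); that is, 𝒻 attains its minimum over [0, ∞) at λ*. -/

import Mathlib

theorem stmt_3 (a1 a2 a3 a4 a5 : ℝ) (h1 : 0 < a1) (h2 : 0 < a2) (h5 : 0 < a5)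
    (h34 : a3 < a4 * a5) (f G : ℝ → ℝ)
    (hf : ∀ l : ℝ, f l = (a1 * l ^ 3 + a2 * l ^ 2 + a3 * l + a4) / (a5 * l + 1))
    (hG : ∀ l : ℝ, G l =
      2 * a1 * a5 * l ^ 3 + (3 * a1 + a2 * a5) * l ^ 2 + 2 * a2 * l + (a3 - a4 * a5)) :
    ∃ lstar : ℝ, 0 < lstar ∧ G lstar = 0 ∧ ∀ l : ℝ, 0 ≤ l → f lstar ≤ f l := by
  have hGfun : G = fun l => 2 * a1 * a5 * l ^ 3 + (3 * a1 + a2 * a5) * l ^ 2 + 2 * a2 * l +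
      (a3 - a4 * a5) := funext hG
  have hc : Continuous G := by rw [hGfun]; continuity
  set b : ℝ := (a4 * a5 - a3) / (2 * a2) + 1 with hbdef
  have hnum : 0 < a4 * a5 - a3 := by linarith
  have hb : 0 < b := by positivity
  have hGb : 0 < G b := by
    rw [hG]
    have hb0 : (0:ℝ) ≤ b := hb.le
    have h2a2 : 2 * a2 * b = (a4 * a5 - a3) + 2 * a2 := by
      rw [hbdef, mul_add, mul_comm (2 * a2), div_mul_cancel₀ _ (by positivity : (2 * a2) ≠ 0)]; ring
    nlinarith [mul_pos (mul_pos (mul_pos two_pos h1) h5) (pow_pos hb 3),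
      mul_pos (by positivity : (0:ℝ) < 3 * a1 + a2 * a5) (pow_pos hb 2)]
  have hG0 : G 0 < 0 := by rw [hG]; nlinarith
  have hmem : (0:ℝ) ∈ Set.Ioo (G 0) (G b) := ⟨hG0, hGb⟩
  obtain ⟨lstar, hls, hGls⟩ := intermediate_value_Ioo hb.le hc.continuousOn hmem
  refine ⟨lstar, hls.1, hGls, fun l hl => ?_⟩
  have hls0 : 0 < lstar := hls.1
  have hden1 : 0 < a5 * lstar + 1 := by positivity
  have hden2 : 0 < a5 * l + 1 := by positivity
  rw [hf, hf, div_le_div_iff₀ hden1 hden2]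
  have hGeq := hG lstar
  rw [hGls] at hGeq
  nlinarith [sq_nonneg (l - lstar), mul_nonneg (mul_nonneg (sq_nonneg (l - lstar)) hl) (mul_nonneg h1.le (mul_nonneg h5.le hls0.le)),
    mul_nonneg (mul_nonneg (sq_nonneg (l - lstar)) hl) h1.le,
    mul_nonneg (sq_nonneg (l - lstar)) (mul_nonneg (mul_nonneg h1.le h5.le) (mul_nonneg hls0.le hls0.le)),
    mul_nonneg (sq_nonneg (l - lstar)) (mul_nonneg h1.le hls0.le),
    mul_nonneg (sq_nonneg (l - lstar)) (mul_nonneg (mul_nonneg h2.le h5.le) hls0.le),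
    mul_nonneg (sq_nonneg (l - lstar)) h2.le]
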